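/- arXiv:2107.10237 — 2 statements merged into one kernel-verified Lean document; each statement's English description precedes it below -/
import Mathlib

section
/- For A, B > 0 and x > 0, ∫_0^∞ e^{-xt} t^{A+B-1} ₁F₁(A, A+B, -t) dt = Γ(A+B) (1+x)^{-A} x^{-B}. -/
open MeasureTheory Real

/-- Confluent hypergeometric function ₁F₁(a,c;z), via its Euler integral
representation (valid for c > a > 0). -/
noncomputable def oneF1 (a c z : ℝ) : ℝ :=
  (Real.Gamma c / (Real.Gamma a * Real.Gamma (c - a))) *
    ∫ τ in (0:ℝ)..1, Real.exp (z * τ) * τ ^ (a - 1) * (1 - τ) ^ (c - a - 1)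

open Set

/-- The complex Beta integrand is the coercion of the real one on `[0,1]`. -/
lemma oneF1_aux_cpow_eq {A B : ℝ} : ∀ τ ∈ Icc (0:ℝ) 1,
    (τ:ℂ) ^ ((A:ℂ) - 1) * (1 - (τ:ℂ)) ^ ((B:ℂ) - 1)
      = ((τ ^ (A-1) * (1-τ) ^ (B-1) : ℝ) : ℂ) := by
  intro τ hτ
  push_cast
  rw [Complex.ofReal_cpow hτ.1, Complex.ofReal_cpow (by linarith [hτ.2])]
  push_cast
  ring

lemma oneF1_aux_beta_integrable {A B : ℝ} (hA : 0 < A) (hB : 0 < B) :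
    IntegrableOn (fun τ : ℝ => τ ^ (A-1) * (1-τ) ^ (B-1)) (Ioc 0 1) := by
  have h := (Complex.betaIntegral_convergent (u := A) (v := B) (by simpa) (by simpa)).1
  have h2 : IntegrableOn (fun τ : ℝ => ((τ ^ (A-1) * (1-τ) ^ (B-1) : ℝ) : ℂ)) (Ioc 0 1) := by
    refine h.congr_fun (fun τ hτ => ?_) measurableSet_Ioc
    exact (oneF1_aux_cpow_eq τ ⟨hτ.1.le, hτ.2⟩)
  have := h2.re
  simp at this
  exact this

lemma oneF1_aux_beta_value {A B : ℝ} (hA : 0 < A) (hB : 0 < B) :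
    ∫ τ in Ioc (0:ℝ) 1, τ ^ (A-1) * (1-τ) ^ (B-1) = Gamma A * Gamma B / Gamma (A+B) := by
  have h := Complex.Gamma_mul_Gamma_eq_betaIntegral (s := (A:ℂ)) (t := (B:ℂ))
    (by simpa) (by simpa)
  rw [Complex.betaIntegral] at h
  have hb : (∫ τ in (0:ℝ)..1, (τ:ℂ) ^ ((A:ℂ) - 1) * (1 - (τ:ℂ)) ^ ((B:ℂ) - 1))
      = ((∫ τ in Ioc (0:ℝ) 1, τ ^ (A-1) * (1-τ) ^ (B-1) : ℝ) : ℂ) := by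
    rw [intervalIntegral.integral_of_le zero_le_one]
    calc ∫ τ in Ioc (0:ℝ) 1, (τ:ℂ) ^ ((A:ℂ) - 1) * (1 - (τ:ℂ)) ^ ((B:ℂ) - 1)
        = ∫ τ in Ioc (0:ℝ) 1, ((τ ^ (A-1) * (1-τ) ^ (B-1) : ℝ) : ℂ) :=
          setIntegral_congr_fun measurableSet_Ioc
            (fun τ hτ => oneF1_aux_cpow_eq τ ⟨hτ.1.le, hτ.2⟩)
      _ = _ := integral_ofReal
  rw [hb, ← Complex.ofReal_add A B, Complex.Gamma_ofReal, Complex.Gamma_ofReal,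
    Complex.Gamma_ofReal] at h
  have hg : (0:ℝ) < Gamma (A+B) := Gamma_pos_of_pos (by linarith)
  have := congrArg Complex.re h
  push_cast at this
  simp at this
  field_simp
  linarith [this]

lemma oneF1_aux_subst {A B x : ℝ} (hx : 0 < x) :
    ∫ τ in Ioc (0:ℝ) 1, τ^(A-1) * (1-τ)^(B-1) * (x+τ)^(-(A+B)) =
      (1+x)^(-A) * x^(-B) * ∫ τ in Ioc (0:ℝ) 1, τ^(A-1) * (1-τ)^(B-1) := by
  have hq : (0:ℝ) < 1 + x := by linarith
  set g : ℝ → ℝ := fun s => x * s / (1 + x - s) with hg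
  set g' : ℝ → ℝ := fun s => x * (1 + x) / (1 + x - s) ^ 2 with hg'
  have hd : ∀ s ∈ Ioo (0:ℝ) 1, (0:ℝ) < 1 + x - s := fun s hs => by
    have := hs.2; linarith
  have hderiv : ∀ s ∈ Ioo (0:ℝ) 1, HasDerivWithinAt g (g' s) (Ioo 0 1) s := by
    intro s hs
    have hds := hd s hs
    have h1 : HasDerivAt (fun s : ℝ => x * s) x s := by
      simpa using (hasDerivAt_id s).const_mul x
    have h2 : HasDerivAt (fun s : ℝ => 1 + x - s) (-1) s := by
      simpa using ((hasDerivAt_id s).const_sub (1+x))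
    have hda := (h1.div h2 hds.ne')
    refine (hda.congr_deriv ?_).hasDerivWithinAt
    rw [hg']
    ring
  have hinj : InjOn g (Ioo 0 1) := by
    intro s1 hs1 s2 hs2 h
    have h1 := hd s1 hs1; have h2 := hd s2 hs2
    rw [hg] at h
    field_simp at h
    have h3 : x * (1 + x) * s1 = x * (1 + x) * s2 := by linear_combination x * h
    exact mul_left_cancel₀ (by positivity) h3
  have himg : g '' Ioo 0 1 = Ioo 0 1 := by
    ext τ
    constructor
    · rintro ⟨s, hs, rfl⟩
      have hds := hd s hs
      constructor
      · exact div_pos (mul_pos hx hs.1) hds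
      · rw [div_lt_one hds]
        nlinarith [hs.2]
    · intro hτ
      have hxτ : (0:ℝ) < x + τ := by linarith [hτ.1]
      refine ⟨τ * (1 + x) / (x + τ), ⟨?_, ?_⟩, ?_⟩
      · exact div_pos (mul_pos hτ.1 hq) hxτ
      · rw [div_lt_one hxτ]
        nlinarith [hτ.2]
      · show x * (τ * (1 + x) / (x + τ)) / (1 + x - τ * (1 + x) / (x + τ)) = τ
        have h5 : 1 + x - τ * (1 + x) / (x + τ) = (1 + x) * x / (x + τ) := by
          field_simp; ring
        rw [h5]
        field_simp
  have key := integral_image_eq_integral_abs_deriv_smul measurableSet_Ioo hderiv hinj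
    (fun τ => τ^(A-1) * (1-τ)^(B-1) * (x+τ)^(-(A+B)))
  rw [himg] at key
  rw [integral_Ioc_eq_integral_Ioo, integral_Ioc_eq_integral_Ioo, key]
  rw [← integral_const_mul]
  refine setIntegral_congr_fun measurableSet_Ioo (fun s hs => ?_)
  have hds := hd s hs
  have hs0 := hs.1
  have hs1 : (0:ℝ) < 1 - s := by linarith [hs.2]
  have e1 : g s = x * s / (1 + x - s) := rfl
  have hgs : 0 < g s := div_pos (mul_pos hx hs0) hds
  have e2 : 1 - g s = (1 + x) * (1 - s) / (1 + x - s) := by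
    rw [e1]; field_simp; ring
  have e3 : x + g s = x * (1 + x) / (1 + x - s) := by
    rw [e1]; field_simp; ring
  have habs : |g' s| = x * (1 + x) / (1 + x - s) ^ 2 := by
    rw [hg', abs_of_pos (by positivity)]
  rw [smul_eq_mul, habs, e1, e2, e3]
  rw [rpow_def_of_pos (by positivity : (0:ℝ) < x * s / (1+x-s)),
    rpow_def_of_pos (by positivity : (0:ℝ) < (1+x) * (1-s) / (1+x-s)),
    rpow_def_of_pos (by positivity : (0:ℝ) < x * (1+x) / (1+x-s)),
    rpow_def_of_pos hq, rpow_def_of_pos hx,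
    rpow_def_of_pos hs0, rpow_def_of_pos hs1,
    ← Real.exp_log (show (0:ℝ) < x * (1+x) / (1+x-s)^2 by positivity)]
  rw [← Real.exp_add, ← Real.exp_add, ← Real.exp_add, ← Real.exp_add, ← Real.exp_add,
    ← Real.exp_add]
  congr 1
  rw [Real.log_div (by positivity) (by positivity), Real.log_div (by positivity) hds.ne',
    Real.log_div (by positivity) hds.ne', Real.log_div (by positivity) hds.ne',
    Real.log_mul hx.ne' hq.ne', Real.log_mul hx.ne' hs0.ne',
    Real.log_mul hq.ne' hs1.ne',
    Real.log_pow]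
  push_cast
  ring

lemma oneF1_aux_gamma_integrable {s b : ℝ} (hs : 0 < s) (hb : 0 < b) :
    IntegrableOn (fun t : ℝ => t ^ (s-1) * exp (-(b*t))) (Ioi 0) := by
  have h := integrableOn_rpow_mul_exp_neg_mul_rpow (p := 1) (s := s-1) (by linarith) zero_lt_one hb
  refine h.congr_fun (fun t ht => ?_) measurableSet_Ioi
  simp only [rpow_one, neg_mul]

lemma oneF1_aux_int {A B x : ℝ} (hA : 0 < A) (hB : 0 < B) (hx : 0 < x) :
    Integrable (Function.uncurry (fun τ t : ℝ =>
      Real.exp (-((x + τ) * t)) * t ^ (A + B - 1) * (τ ^ (A-1) * (1 - τ) ^ (B-1))))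
      ((volume.restrict (Ioc (0:ℝ) 1)).prod (volume.restrict (Ioi (0:ℝ)))) := by
  have hAB : 0 < A + B := by linarith
  rw [integrable_prod_iff]
  · refine ⟨?_, ?_⟩
    · filter_upwards [ae_restrict_mem measurableSet_Ioc] with τ hτ
      have hb : 0 < x + τ := by linarith [hτ.1]
      exact IntegrableOn.congr_fun ((oneF1_aux_gamma_integrable hAB hb).mul_const
        (τ ^ (A-1) * (1 - τ) ^ (B-1)))
        (fun t ht => by simp only [Function.uncurry]; ring) measurableSet_Ioi
    · have hnice : IntegrableOn (fun τ : ℝ =>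
          ((1 / (x + τ)) ^ (A + B) * Gamma (A + B)) * (τ ^ (A-1) * (1-τ) ^ (B-1)))
          (Ioc 0 1) := by
        have hcont : ContinuousOn (fun τ : ℝ => (1 / (x + τ)) ^ (A + B) * Gamma (A + B))
            (Icc 0 1) := by
          refine ContinuousOn.mul (ContinuousOn.rpow_const ?_ (fun τ hτ => ?_)) continuousOn_const
          · exact (continuousOn_const.div (continuousOn_const.add continuousOn_id)
              (fun τ hτ => by have := hτ.1; positivity))
          · left; have := hτ.1; positivity
        have hbeta : IntegrableOn (fun τ : ℝ => τ ^ (A-1) * (1-τ) ^ (B-1)) (Icc 0 1) := by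
          rw [integrableOn_Icc_iff_integrableOn_Ioc]; exact oneF1_aux_beta_integrable hA hB
        exact (IntegrableOn.continuousOn_mul hcont hbeta isCompact_Icc).mono_set
          Ioc_subset_Icc_self
      refine hnice.congr ?_
      filter_upwards [ae_restrict_mem measurableSet_Ioc] with τ hτ
      have hb : 0 < x + τ := by linarith [hτ.1]
      have hnn : ∀ t ∈ Ioi (0:ℝ), 0 ≤ Real.exp (-((x + τ) * t)) * t ^ (A + B - 1) *
          (τ ^ (A-1) * (1 - τ) ^ (B-1)) := by
        intro t ht
        have h1 : (0:ℝ) < τ := hτ.1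
        have h2 : (0:ℝ) ≤ 1 - τ := by linarith [hτ.2]
        have h3 : (0:ℝ) < t := ht
        positivity
      symm
      calc ∫ t in Ioi (0:ℝ), ‖Real.exp (-((x + τ) * t)) * t ^ (A + B - 1) *
              (τ ^ (A-1) * (1 - τ) ^ (B-1))‖
          = ∫ t in Ioi (0:ℝ), Real.exp (-((x + τ) * t)) * t ^ (A + B - 1) *
              (τ ^ (A-1) * (1 - τ) ^ (B-1)) := by
            refine setIntegral_congr_fun measurableSet_Ioi (fun t ht => ?_)
            rw [Real.norm_eq_abs, abs_of_nonneg (hnn t ht)]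
        _ = (∫ t in Ioi (0:ℝ), t ^ (A + B - 1) * Real.exp (-((x + τ) * t))) *
              (τ ^ (A-1) * (1 - τ) ^ (B-1)) := by
            rw [← integral_mul_const]
            exact setIntegral_congr_fun measurableSet_Ioi (fun t ht => by ring)
        _ = ((1 / (x + τ)) ^ (A + B) * Gamma (A + B)) * (τ ^ (A-1) * (1-τ) ^ (B-1)) := by
            rw [integral_rpow_mul_exp_neg_mul_Ioi hAB hb]
  · refine Measurable.aestronglyMeasurable ?_
    exact ((((measurable_fst.const_add x).mul measurable_snd).neg.exp.mul
      (measurable_snd.pow_const _)).mul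
      ((measurable_fst.pow_const _).mul ((measurable_const.sub measurable_fst).pow_const _)))

theorem stmt_5 (A B x : ℝ) (hA : 0 < A) (hB : 0 < B) (hx : 0 < x) :
    ∫ t in Set.Ioi (0 : ℝ),
        Real.exp (-(x * t)) * t ^ (A + B - 1) * oneF1 A (A + B) (-t) =
      Real.Gamma (A + B) * (1 + x) ^ (-A) * x ^ (-B) := by
  have hAB : 0 < A + B := by linarith
  have hGA : (0:ℝ) < Gamma A := Gamma_pos_of_pos hA
  have hGB : (0:ℝ) < Gamma B := Gamma_pos_of_pos hB
  have hGAB : (0:ℝ) < Gamma (A + B) := Gamma_pos_of_pos hAB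
  set C : ℝ := Gamma (A+B) / (Gamma A * Gamma B) with hC
  have step1 : ∀ t ∈ Ioi (0:ℝ),
      Real.exp (-(x * t)) * t ^ (A + B - 1) * oneF1 A (A + B) (-t)
        = C * ∫ τ in Ioc (0:ℝ) 1,
            Real.exp (-((x + τ) * t)) * t ^ (A + B - 1) * (τ ^ (A-1) * (1-τ) ^ (B-1)) := by
    intro t ht
    rw [oneF1, add_sub_cancel_left, intervalIntegral.integral_of_le zero_le_one]
    rw [show Real.exp (-(x * t)) * t ^ (A + B - 1) *
        (Gamma (A+B) / (Gamma A * Gamma B) *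
          ∫ τ in Ioc (0:ℝ) 1, Real.exp (-t * τ) * τ ^ (A - 1) * (1 - τ) ^ (B - 1))
      = C * ((Real.exp (-(x * t)) * t ^ (A + B - 1)) *
          ∫ τ in Ioc (0:ℝ) 1, Real.exp (-t * τ) * τ ^ (A - 1) * (1 - τ) ^ (B - 1)) by
        rw [hC]; ring]
    rw [← integral_const_mul]
    congr 1
    refine setIntegral_congr_fun measurableSet_Ioc (fun τ hτ => ?_)
    rw [show Real.exp (-((x + τ) * t)) = Real.exp (-(x * t)) * Real.exp (-t * τ) by
      rw [← Real.exp_add]; congr 1; ring]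
    ring
  rw [setIntegral_congr_fun measurableSet_Ioi step1, integral_const_mul]
  rw [← integral_integral_swap (oneF1_aux_int hA hB hx)]
  have step2 : ∀ τ ∈ Ioc (0:ℝ) 1,
      (∫ t in Ioi (0:ℝ),
          Real.exp (-((x + τ) * t)) * t ^ (A + B - 1) * (τ ^ (A-1) * (1-τ) ^ (B-1)))
        = Gamma (A+B) * (τ ^ (A-1) * (1-τ) ^ (B-1) * (x+τ) ^ (-(A+B))) := by
    intro τ hτ
    have hb : 0 < x + τ := by linarith [hτ.1]
    calc (∫ t in Ioi (0:ℝ),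
            Real.exp (-((x + τ) * t)) * t ^ (A + B - 1) * (τ ^ (A-1) * (1-τ) ^ (B-1)))
        = (∫ t in Ioi (0:ℝ), t ^ (A + B - 1) * Real.exp (-((x + τ) * t))) *
            (τ ^ (A-1) * (1-τ) ^ (B-1)) := by
          rw [← integral_mul_const]
          exact setIntegral_congr_fun measurableSet_Ioi (fun t ht => by ring)
      _ = ((1 / (x + τ)) ^ (A + B) * Gamma (A+B)) * (τ ^ (A-1) * (1-τ) ^ (B-1)) := by
          rw [integral_rpow_mul_exp_neg_mul_Ioi hAB hb]
      _ = Gamma (A+B) * (τ ^ (A-1) * (1-τ) ^ (B-1) * (x+τ) ^ (-(A+B))) := by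
          rw [one_div, Real.inv_rpow hb.le, ← Real.rpow_neg hb.le]
          ring
  rw [setIntegral_congr_fun measurableSet_Ioc step2, integral_const_mul,
    oneF1_aux_subst hx, oneF1_aux_beta_value hA hB]
  rw [hC]
  field_simp
end

section
/- For real parameters a and with c > b > 0, 0 ≤ z < 1: ∫_0^1 t^{b-1} (1-t)^{c-b-1} (1 - z t)^{-a} dt = β(b, c-b) · ₂F₁(a, b, c; z), where ₂F₁ is defined by its power series ∑_{n≥0} (a)_n (b)_n / (n! (c)_n) z^n. -/
open MeasureTheory Real Filter Topology

/-- Pochhammer symbol (a)_n = a(a+1)⋯(a+n-1). -/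
noncomputable def poch (a : ℝ) (n : ℕ) : ℝ := (ascPochhammer ℝ n).eval a

lemma poch_zero (a : ℝ) : poch a 0 = 1 := by simp [poch]

lemma poch_succ (a : ℝ) (n : ℕ) : poch a (n+1) = poch a n * (a + n) := by
  simp [poch, ascPochhammer_succ_eval]

lemma poch_pos {a : ℝ} (ha : 0 < a) (n : ℕ) : 0 < poch a n := by
  induction n with
  | zero => simp [poch_zero]
  | succ n ih => rw [poch_succ]; positivity

lemma poch_le_poch {a b : ℝ} (ha : 0 < a) (hab : a ≤ b) (n : ℕ) : poch a n ≤ poch b n := by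
  induction n with
  | zero => simp [poch_zero]
  | succ n ih =>
      rw [poch_succ, poch_succ]
      have h1 := poch_pos ha n
      have h2 : (0:ℝ) < a + n := by positivity
      gcongr
      linarith

lemma summable_poch (a x : ℝ) (k : ℕ) (hx0 : 0 ≤ x) (hx1 : x < 1) :
    Summable (fun n : ℕ => |poch a (n+k)| / n.factorial * x ^ n) := by
  set r : ℝ := (1+x)/2 with hrdef
  have hxr : x < r := by rw [hrdef]; linarith
  have hr1 : r < 1 := by rw [hrdef]; linarith
  have hr0 : 0 < r := by rw [hrdef]; linarith
  apply summable_of_ratio_norm_eventually_le hr1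
  have hN : ∀ᶠ n : ℕ in atTop, (|a| + k) * x ≤ n * (r - x) :=
    (tendsto_natCast_atTop_atTop.atTop_mul_const (by linarith : (0:ℝ) < r - x)).eventually_ge_atTop
      ((|a| + k) * x)
  filter_upwards [hN] with n hn
  have hfac : (0:ℝ) < n.factorial := by positivity
  have key : |poch a (n+1+k)| / (n+1).factorial * x ^ (n+1)
      ≤ r * (|poch a (n+k)| / n.factorial * x ^ n) := by
    have hnk : n + 1 + k = (n + k) + 1 := by omega
    rw [hnk, poch_succ, Nat.factorial_succ, pow_succ, abs_mul, Nat.cast_mul]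
    have hA : |a + ((n+k : ℕ):ℝ)| * x ≤ r * (n+1) := by
      have h1 : |a + ((n+k:ℕ):ℝ)| ≤ |a| + ((n:ℝ)+(k:ℝ)) := by
        have habs : |((n+k:ℕ):ℝ)| = (n:ℝ)+(k:ℝ) := by
          rw [abs_of_nonneg (by positivity)]; push_cast; ring
        calc |a + ((n+k:ℕ):ℝ)| ≤ |a| + |((n+k:ℕ):ℝ)| := abs_add_le _ _
        _ = |a| + ((n:ℝ)+(k:ℝ)) := by rw [habs]
      nlinarith [abs_nonneg (a + ((n+k:ℕ):ℝ))]
    push_cast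
    calc |poch a (n+k)| * |a + ((n:ℝ)+(k:ℝ))| / (((n:ℝ)+1) * n.factorial) * (x ^ n * x)
        = (|poch a (n+k)| / n.factorial * x ^ n) * (|a + ((n:ℝ)+(k:ℝ))| * x / ((n:ℝ)+1)) := by
          field_simp
      _ ≤ (|poch a (n+k)| / n.factorial * x ^ n) * r := by
          gcongr
          rw [div_le_iff₀ (by positivity)]
          have : |a + ((n:ℝ)+(k:ℝ))| = |a + ((n+k:ℕ):ℝ)| := by push_cast; ring_nf
          rw [this]
          linarith [hA]
      _ = r * (|poch a (n+k)| / n.factorial * x ^ n) := by ring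
  calc ‖|poch a (n+1+k)| / (n+1).factorial * x ^ (n+1)‖
      = |poch a (n+1+k)| / (n+1).factorial * x ^ (n+1) := by
        rw [Real.norm_eq_abs, abs_mul, abs_div, abs_abs, Nat.abs_cast, abs_pow,
          abs_of_nonneg hx0]
    _ ≤ r * (|poch a (n+k)| / n.factorial * x ^ n) := key
    _ = r * ‖|poch a (n+k)| / n.factorial * x ^ n‖ := by
        rw [Real.norm_eq_abs, abs_mul, abs_div, abs_abs, Nat.abs_cast, abs_pow,
          abs_of_nonneg hx0]

lemma summable_poch' (a x : ℝ) (hx0 : 0 ≤ x) (hx1 : x < 1) :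
    Summable (fun n : ℕ => |poch a n| / n.factorial * x ^ n) := by
  simpa using summable_poch a x 0 hx0 hx1

/-- The bound sequence for derivatives. -/
lemma summable_deriv_bound (a r : ℝ) (hr0 : 0 ≤ r) (hr1 : r < 1) :
    Summable (fun n : ℕ => |poch a n| / n.factorial * (n * r ^ (n-1))) := by
  rw [← summable_nat_add_iff 1]
  have : (fun n : ℕ => |poch a (n+1)| / (n+1).factorial * (((n+1):ℕ) * r ^ ((n+1)-1)))
      = fun n : ℕ => |poch a (n+1)| / n.factorial * r ^ n := by
    funext n
    rw [Nat.add_sub_cancel, Nat.factorial_succ, Nat.cast_mul]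
    field_simp
  rw [this]
  exact summable_poch a r 1 hr0 hr1

lemma summable_deriv (a t : ℝ) (ht : |t| < 1) :
    Summable (fun n : ℕ => poch a n / n.factorial * (n * t ^ (n-1))) := by
  set r : ℝ := (1+|t|)/2 with hrdef
  have h1 : |t| < r := by rw [hrdef]; linarith [abs_nonneg t]
  have h2 : r < 1 := by rw [hrdef]; linarith
  have h3 : 0 ≤ r := by rw [hrdef]; positivity
  apply Summable.of_norm_bounded (summable_deriv_bound a r h3 h2)
  intro n
  rw [Real.norm_eq_abs, abs_mul, abs_div, Nat.abs_cast, abs_mul, Nat.abs_cast, abs_pow]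
  gcongr

lemma hasDerivAt_f (a : ℝ) {x : ℝ} (hx : |x| < 1) :
    HasDerivAt (fun y => ∑' n : ℕ, poch a n / n.factorial * y ^ n)
      (∑' n : ℕ, poch a n / n.factorial * (n * x ^ (n-1))) x := by
  set r : ℝ := (1+|x|)/2 with hrdef
  have h1 : |x| < r := by rw [hrdef]; linarith [abs_nonneg x]
  have h2 : r < 1 := by rw [hrdef]; linarith
  have h3 : 0 < r := by rw [hrdef]; positivity
  refine hasDerivAt_tsum_of_isPreconnected (summable_deriv_bound a r h3.le h2)
    (isOpen_Ioo (a := -r) (b := r)) (convex_Ioo _ _).isPreconnected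
    (fun n y _ => (hasDerivAt_pow n y).const_mul (poch a n / n.factorial))
    (fun n y hy => ?_) (y₀ := 0) ⟨by linarith, by linarith⟩
    ?_ ⟨by linarith [neg_abs_le x], by linarith [le_abs_self x]⟩
  · rw [Real.norm_eq_abs, abs_mul, abs_div, Nat.abs_cast, abs_mul, Nat.abs_cast, abs_pow]
    gcongr
    exact (abs_lt.mpr ⟨hy.1, hy.2⟩).le
  · apply summable_of_ne_finset_zero (s := ({0} : Finset ℕ))
    intro n hn
    simp only [Finset.mem_singleton] at hn
    simp [zero_pow hn]

lemma hasDerivAt_g (a : ℝ) {t : ℝ} (ht0 : 0 ≤ t) (ht1 : t < 1) :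
    HasDerivAt (fun y => (∑' n : ℕ, poch a n / n.factorial * y ^ n) * (1 - y) ^ a) 0 t := by
  have habs : |t| < 1 := by rw [abs_of_nonneg ht0]; exact ht1
  have h1t : (0:ℝ) < 1 - t := by linarith
  set D : ℝ := ∑' n : ℕ, poch a n / n.factorial * (n * t ^ (n-1)) with hD
  set f : ℝ → ℝ := fun y => ∑' n : ℕ, poch a n / n.factorial * y ^ n with hf
  have hsumD : Summable (fun n : ℕ => poch a n / n.factorial * (n * t ^ (n-1))) :=
    summable_deriv a t habs
  have hS : Summable (fun n : ℕ => poch a n / n.factorial * t ^ n) := by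
    apply Summable.of_norm_bounded (summable_poch' a t ht0 ht1)
    intro n
    rw [Real.norm_eq_abs, abs_mul, abs_div, Nat.abs_cast, abs_pow, abs_of_nonneg ht0]
  have hODE : (1 - t) * D = a * f t := by
    have h1 : D = ∑' n : ℕ, poch a (n+1) / (n+1).factorial * ((n+1 : ℕ) * t ^ ((n+1)-1)) := by
      rw [hD, hsumD.tsum_eq_zero_add]
      simp
    have h2 : ∀ n : ℕ, poch a (n+1) / (n+1).factorial * ((n+1 : ℕ) * t ^ ((n+1)-1))
        = a * (poch a n / n.factorial * t ^ n) + t * (poch a n / n.factorial * (n * t ^ (n-1))) := by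
      intro n
      rw [Nat.add_sub_cancel, poch_succ, Nat.factorial_succ, Nat.cast_mul]
      have hfac : ((n.factorial : ℝ)) ≠ 0 := by positivity
      have hn1 : ((n:ℝ)+1) ≠ 0 := by positivity
      have htn : t * ((n:ℝ) * t ^ (n-1)) = (n:ℝ) * t ^ n := by
        cases n with
        | zero => simp
        | succ m => rw [Nat.add_sub_cancel, pow_succ]; ring
      field_simp
      linear_combination (-(poch a n)) * htn
    have h3 : D = a * f t + t * D := by
      conv_lhs => rw [h1, tsum_congr h2, Summable.tsum_add (hS.mul_left a) (hsumD.mul_left t),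
        tsum_mul_left, tsum_mul_left]
    linarith [h3]
  have hfd : HasDerivAt f D t := hasDerivAt_f a habs
  have hrd : HasDerivAt (fun y => (1 - y) ^ a) (-1 * a * (1 - t) ^ (a - 1)) t := by
    have := ((hasDerivAt_id t).const_sub 1).rpow_const (p := a) (Or.inl h1t.ne')
    simpa using this
  have := hfd.mul hrd
  refine this.congr_deriv ?_
  have hsplit : (1 - t) ^ a = (1 - t) ^ (a - 1) * (1 - t) := by
    have h := Real.rpow_add h1t (a-1) 1
    rw [Real.rpow_one] at h
    rw [show a - 1 + 1 = a by ring] at h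
    exact h
  rw [hsplit]
  linear_combination ((1 - t) ^ (a - 1)) * hODE

lemma binom (a : ℝ) {x : ℝ} (hx0 : 0 ≤ x) (hx1 : x < 1) :
    ∑' n : ℕ, poch a n / n.factorial * x ^ n = (1 - x) ^ (-a) := by
  set g : ℝ → ℝ := fun y => (∑' n : ℕ, poch a n / n.factorial * y ^ n) * (1 - y) ^ a with hg
  have hder : ∀ t ∈ Set.Icc (0:ℝ) x, HasDerivAt g 0 t := by
    intro t ht
    exact hasDerivAt_g a ht.1 (lt_of_le_of_lt ht.2 hx1)
  have hconst : g x = g 0 := by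
    have := constant_of_has_deriv_right_zero
      (fun t ht => (hder t ht).continuousAt.continuousWithinAt)
      (fun t ht => ((hder t (Set.mem_Icc_of_Ico ht)).hasDerivWithinAt))
      x (Set.mem_Icc.mpr ⟨hx0, le_refl x⟩)
    exact this
  have hg0 : g 0 = 1 := by
    rw [hg]
    simp only
    have : ∑' n : ℕ, poch a n / n.factorial * (0:ℝ) ^ n = 1 := by
      rw [tsum_eq_single 0 (fun n hn => by simp [zero_pow hn])]
      simp [poch_zero]
    rw [this]
    simp
  have h1x : (0:ℝ) < 1 - x := by linarith
  have hgx : (∑' n : ℕ, poch a n / n.factorial * x ^ n) * (1 - x) ^ a = 1 := by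
    have := hconst.trans hg0
    simpa only [hg] using this
  rw [Real.rpow_neg h1x.le]
  exact eq_inv_of_mul_eq_one_left hgx

/-- Beta function. -/
noncomputable def betaFn (a b : ℝ) : ℝ := Real.Gamma a * Real.Gamma b / Real.Gamma (a + b)

lemma beta_eqOn {p q : ℝ} : ∀ t ∈ Set.uIcc (0:ℝ) 1,
    ((t:ℂ) ^ ((p:ℂ) - 1) * (1 - (t:ℂ)) ^ ((q:ℂ) - 1)) = ((t ^ (p-1) * (1-t) ^ (q-1) : ℝ) : ℂ) := by
  intro t ht
  rw [Set.uIcc_of_le zero_le_one] at ht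
  have ht0 : (0:ℝ) ≤ t := ht.1
  have ht1 : (0:ℝ) ≤ 1 - t := by linarith [ht.2]
  rw [Complex.ofReal_mul, Complex.ofReal_cpow ht0, Complex.ofReal_cpow ht1]
  push_cast
  ring

lemma betaIntegrable {p q : ℝ} (hp : 0 < p) (hq : 0 < q) :
    IntervalIntegrable (fun t : ℝ => t ^ (p-1) * (1-t) ^ (q-1)) volume 0 1 := by
  have hc : IntervalIntegrable
      (fun t : ℝ => (t:ℂ) ^ ((p:ℂ)-1) * (1 - (t:ℂ)) ^ ((q:ℂ)-1)) volume 0 1 :=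
    Complex.betaIntegral_convergent (by simpa) (by simpa)
  rw [intervalIntegrable_iff] at hc ⊢
  have heq : Set.EqOn (fun t : ℝ => (t:ℂ) ^ ((p:ℂ)-1) * (1 - (t:ℂ)) ^ ((q:ℂ)-1))
      (fun t : ℝ => ((t ^ (p-1) * (1-t) ^ (q-1) : ℝ) : ℂ)) (Set.uIoc (0:ℝ) 1) := by
    intro t ht
    exact beta_eqOn t (Set.uIoc_subset_uIcc ht)
  have h2 : IntegrableOn (fun t : ℝ => ((t ^ (p-1) * (1-t) ^ (q-1) : ℝ) : ℂ))
      (Set.uIoc (0:ℝ) 1) volume := hc.congr_fun heq measurableSet_uIoc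
  have h3 := h2.re
  have h4 : (fun t : ℝ => RCLike.re (((t ^ (p-1) * (1-t) ^ (q-1) : ℝ) : ℂ)))
      = fun t : ℝ => t ^ (p-1) * (1-t) ^ (q-1) := by
    funext t
    simp [RCLike.ofReal_re]
  rwa [h4] at h3

lemma betaIntegral_real {p q : ℝ} (hp : 0 < p) (hq : 0 < q) :
    ∫ t in (0:ℝ)..1, t ^ (p-1) * (1-t) ^ (q-1) = betaFn p q := by
  have h1 : Complex.betaIntegral p q
      = Complex.ofReal (∫ t in (0:ℝ)..1, t ^ (p-1) * (1-t) ^ (q-1)) := by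
    rw [Complex.betaIntegral, intervalIntegral.integral_congr beta_eqOn]
    exact_mod_cast RCLike.intervalIntegral_ofReal (𝕜 := ℂ)
  have h2 := Complex.Gamma_mul_Gamma_eq_betaIntegral
    (s := (p:ℂ)) (t := (q:ℂ)) (by simpa) (by simpa)
  rw [h1, ← Complex.ofReal_add, Complex.Gamma_ofReal, Complex.Gamma_ofReal,
    Complex.Gamma_ofReal, ← Complex.ofReal_mul, ← Complex.ofReal_mul] at h2
  have h3 := Complex.ofReal_inj.mp h2
  have hpq : 0 < Real.Gamma (p+q) := Real.Gamma_pos_of_pos (by linarith)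
  rw [betaFn]
  field_simp
  linarith [h3]

lemma Gamma_poch {x : ℝ} (hx : 0 < x) (n : ℕ) :
    Real.Gamma (x + n) = Real.Gamma x * poch x n := by
  induction n with
  | zero => simp [poch_zero]
  | succ n ih =>
      have hxn : x + (n:ℝ) ≠ 0 := by positivity
      have h : x + ((n+1:ℕ):ℝ) = (x + n) + 1 := by push_cast; ring
      rw [h, Real.Gamma_add_one hxn, ih, poch_succ]
      ring

lemma betaFn_poch {b c : ℝ} (hb : 0 < b) (hbc : b < c) (n : ℕ) :
    betaFn (b + n) (c - b) = betaFn b (c - b) * (poch b n / poch c n) := by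
  have hc : 0 < c := lt_trans hb hbc
  have hcb : 0 < c - b := by linarith
  rw [betaFn, betaFn]
  have h1 : b + (n:ℝ) + (c - b) = c + n := by ring
  have h2 : b + (c - b) = c := by ring
  rw [h1, h2, Gamma_poch hb n, Gamma_poch hc n]
  have g1 : Real.Gamma c ≠ 0 := (Real.Gamma_pos_of_pos hc).ne'
  have g2 : poch c n ≠ 0 := (poch_pos hc n).ne'
  field_simp

/-- Gauss hypergeometric function ₂F₁(a,b,c;z), defined by its power series. -/
noncomputable def twoF1 (a b c z : ℝ) : ℝ :=
  ∑' n : ℕ, (poch a n * poch b n) / ((n.factorial : ℝ) * poch c n) * z ^ n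

theorem stmt_8 (a b c z : ℝ) (hb : 0 < b) (hbc : b < c) (hz0 : 0 ≤ z) (hz1 : z < 1) :
    ∫ t in (0:ℝ)..1, t ^ (b - 1) * (1 - t) ^ (c - b - 1) * (1 - z * t) ^ (-a) =
      betaFn b (c - b) * twoF1 a b c z := by
  have hc : 0 < c := lt_trans hb hbc
  have hcb : 0 < c - b := by linarith
  set B := betaFn b (c - b) with hB
  have hBpos : 0 < B := by
    rw [hB, betaFn]
    have g1 := Real.Gamma_pos_of_pos hb
    have g2 := Real.Gamma_pos_of_pos hcb
    have g3 := Real.Gamma_pos_of_pos (show (0:ℝ) < b + (c-b) by linarith)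
    positivity
  set F : ℕ → ℝ → ℝ := fun n t =>
    (poch a n / n.factorial * z ^ n) * (t ^ (b + n - 1) * (1-t) ^ (c - b - 1)) with hF
  have hFint : ∀ n : ℕ, Integrable (F n) (volume.restrict (Set.Ioc (0:ℝ) 1)) := by
    intro n
    have hbn : 0 < b + (n:ℝ) := by positivity
    have h := betaIntegrable (p := b + n) (q := c - b) hbn hcb
    rw [intervalIntegrable_iff_integrableOn_Ioc_of_le zero_le_one] at h
    exact h.const_mul _
  have hFval : ∀ n : ℕ, ∫ t in Set.Ioc (0:ℝ) 1, F n t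
      = (poch a n / n.factorial * z ^ n) * (B * (poch b n / poch c n)) := by
    intro n
    have hbn : 0 < b + (n:ℝ) := by positivity
    rw [hF]
    simp only
    rw [integral_const_mul _ _, ← intervalIntegral.integral_of_le zero_le_one,
      betaIntegral_real hbn hcb, betaFn_poch hb hbc n]
  have hFnorm : ∀ n : ℕ, ∫ t in Set.Ioc (0:ℝ) 1, ‖F n t‖
      = (|poch a n| / n.factorial * z ^ n) * (B * (poch b n / poch c n)) := by
    intro n
    have hbn : 0 < b + (n:ℝ) := by positivity
    have heq : Set.EqOn (fun t => ‖F n t‖)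
        (fun t => (|poch a n| / n.factorial * z ^ n) * (t ^ (b + n - 1) * (1-t) ^ (c-b-1)))
        (Set.Ioc (0:ℝ) 1) := by
      intro t ht
      have ht0 : (0:ℝ) < t := ht.1
      have ht1 : t ≤ 1 := ht.2
      simp only [hF, Real.norm_eq_abs, abs_mul]
      rw [abs_div, Nat.abs_cast, abs_pow, abs_of_nonneg hz0,
        abs_of_nonneg (Real.rpow_nonneg ht0.le _),
        abs_of_nonneg (Real.rpow_nonneg (by linarith : (0:ℝ) ≤ 1 - t) _)]
    rw [setIntegral_congr_fun measurableSet_Ioc heq,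
      integral_const_mul _ _, ← intervalIntegral.integral_of_le zero_le_one,
      betaIntegral_real hbn hcb, betaFn_poch hb hbc n]
  have hFsum : Summable (fun n => ∫ t in Set.Ioc (0:ℝ) 1, ‖F n t‖) := by
    rw [funext hFnorm]
    apply Summable.of_nonneg_of_le _ _ ((summable_poch' a z hz0 hz1).mul_right B)
    · intro n
      have p1 := poch_pos hb n
      have p2 := poch_pos hc n
      positivity
    · intro n
      have p1 := poch_pos hb n
      have p2 := poch_pos hc n
      have hr : poch b n / poch c n ≤ 1 := (div_le_one p2).mpr (poch_le_poch hb hbc.le n)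
      have hx : (0:ℝ) ≤ |poch a n| / n.factorial * z ^ n := by positivity
      calc (|poch a n| / n.factorial * z ^ n) * (B * (poch b n / poch c n))
          ≤ (|poch a n| / n.factorial * z ^ n) * (B * 1) := by gcongr
        _ = |poch a n| / n.factorial * z ^ n * B := by ring
  have hswap := MeasureTheory.integral_tsum_of_summable_integral_norm hFint hFsum
  rw [intervalIntegral.integral_of_le zero_le_one]
  have hcongr : Set.EqOn (fun t => t ^ (b-1) * (1-t) ^ (c-b-1) * (1 - z*t) ^ (-a))
      (fun t => ∑' n, F n t) (Set.Ioc (0:ℝ) 1) := by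
    intro t ht
    have ht0 : (0:ℝ) < t := ht.1
    have ht1 : t ≤ 1 := ht.2
    have hzt0 : 0 ≤ z * t := by positivity
    have hzt1 : z * t < 1 := lt_of_le_of_lt (by nlinarith : z * t ≤ z) hz1
    simp only
    rw [← binom a hzt0 hzt1, ← tsum_mul_left]
    apply tsum_congr
    intro n
    rw [hF]
    simp only
    rw [mul_pow]
    have htp : t ^ (b + n - 1) = t ^ (b-1) * t ^ n := by
      rw [← Real.rpow_natCast t n, ← Real.rpow_add ht0]
      ring_nf
    rw [htp]
    ring
  rw [setIntegral_congr_fun measurableSet_Ioc hcongr, ← hswap, funext hFval]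
  have hstep : ∀ n : ℕ, (poch a n / n.factorial * z ^ n) * (B * (poch b n / poch c n))
      = B * ((poch a n * poch b n) / ((n.factorial : ℝ) * poch c n) * z ^ n) := by
    intro n
    have p2 : poch c n ≠ 0 := (poch_pos hc n).ne'
    have hfac : ((n.factorial : ℝ)) ≠ 0 := by positivity
    field_simp
  rw [tsum_congr hstep, tsum_mul_left, twoF1]
end
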